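/- Let d ≥ 3, let 0 < ζ ≤ √2, set ℓ = ⌊d/2⌋ + 1, and define the Wendland activation γ : [−1,1] → ℝ by γ(z) = (1 − √(2 − 2z)/ζ)₊^ℓ, where (t)₊ = max(t,0). Then for every n ≥ 1 and all pairwise distinct unit vectors x₁,…,xₙ ∈ S^{d−1}, the matrix H with H_{ij} = ∫_{S^{d−1}} γ(xᵢᵀw) γ(wᵀxⱼ) dσ(w) is strictly positive definite. -/

import Mathlib

open MeasureTheory Matrix
open scoped InnerProductSpace Matrix.Norms.L2Operator

/-- The uniform probability measure on the unit sphere `S^{d-1} ⊆ ℝ^d`,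
viewed as a measure on the ambient Euclidean space. -/
noncomputable def sphereUniform (d : ℕ) : Measure (EuclideanSpace ℝ (Fin d)) :=
  (((volume : Measure (EuclideanSpace ℝ (Fin d))).toSphere Set.univ)⁻¹ •
    (volume : Measure (EuclideanSpace ℝ (Fin d))).toSphere).map Subtype.val

/-- Sign pattern of the special eight-point set. -/
noncomputable def sgn : Fin 8 → Fin 3 → ℝ :=
  ![![1,1,1], ![-1,1,1], ![1,-1,1], ![1,1,-1], ![-1,-1,1], ![-1,1,-1], ![1,-1,-1], ![-1,-1,-1]]

/-- The special point set `x₁, …, x₈ ∈ ℝ^d`: the first three coordinates are `±1/√3`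
with the sign pattern `sgn`, and all remaining coordinates vanish. -/
noncomputable def pts (d : ℕ) (i : Fin 8) : Fin d → ℝ :=
  fun j => if h : (j : ℕ) < 3 then (1 / Real.sqrt 3) * sgn i ⟨j, h⟩ else 0

/-- The special point set, viewed in Euclidean space. -/
noncomputable def ptsE (d : ℕ) (i : Fin 8) : EuclideanSpace ℝ (Fin d) :=
  (WithLp.equiv 2 (Fin d → ℝ)).symm (pts d i)

/-- Smallest eigenvalue of a real symmetric matrix, via the Rayleigh quotient. -/
noncomputable def lamMin {n : ℕ} (A : Matrix (Fin n) (Fin n) ℝ) : ℝ :=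
  sInf {r | ∃ u : Fin n → ℝ, ∑ i, u i ^ 2 = 1 ∧ r = u ⬝ᵥ A.mulVec u}

/-- Largest eigenvalue of a real symmetric matrix, via the Rayleigh quotient. -/
noncomputable def lamMax {n : ℕ} (A : Matrix (Fin n) (Fin n) ℝ) : ℝ :=
  sSup {r | ∃ u : Fin n → ℝ, ∑ i, u i ^ 2 = 1 ∧ r = u ⬝ᵥ A.mulVec u}

/-- Euclidean norm of a vector in `ℝ^n`. -/
noncomputable def e2 {n : ℕ} (v : Fin n → ℝ) : ℝ := Real.sqrt (∑ i, v i ^ 2)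

/-- The vector `v = (1,−1,−1,−1,1,1,1,−1)`. -/
noncomputable def vv : Fin 8 → ℝ := ![1, -1, -1, -1, 1, 1, 1, -1]


section Stmt9AuxSection
open scoped Pointwise

namespace Stmt9Aux


/-- The globally-defined continuous Wendland function. -/
noncomputable def gg (ζ : ℝ) (ℓ : ℕ) (z : ℝ) : ℝ :=
  max (1 - Real.sqrt (2 - 2 * z) / ζ) 0 ^ ℓ

/-- The inner function. -/
noncomputable def qq (ζ : ℝ) (z : ℝ) : ℝ := 1 - Real.sqrt (2 - 2 * z) / ζ

lemma gg_eq (ζ : ℝ) (ℓ : ℕ) (z : ℝ) : gg ζ ℓ z = max (qq ζ z) 0 ^ ℓ := rfl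

lemma qq_continuous (ζ : ℝ) : Continuous (qq ζ) := by
  unfold qq
  fun_prop

lemma gg_continuous (ζ : ℝ) (ℓ : ℕ) : Continuous (gg ζ ℓ) := by
  unfold gg
  fun_prop

lemma gg_nonneg (ζ : ℝ) (ℓ : ℕ) (z : ℝ) : 0 ≤ gg ζ ℓ z :=
  pow_nonneg (le_max_right _ _) _

lemma gg_le_one {ζ : ℝ} (hζ : 0 < ζ) (ℓ : ℕ) (z : ℝ) : gg ζ ℓ z ≤ 1 := by
  apply pow_le_one₀ (le_max_right _ _)
  have h1 : 0 ≤ Real.sqrt (2 - 2 * z) / ζ := by positivity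
  have : 1 - Real.sqrt (2 - 2 * z) / ζ ≤ 1 := by linarith
  exact max_le this zero_le_one

lemma gg_one {ζ : ℝ} (hζ : 0 < ζ) (ℓ : ℕ) : gg ζ ℓ 1 = 1 := by
  unfold gg
  norm_num

lemma qq_hasDerivAt {ζ : ℝ} (hζ : 0 < ζ) {a : ℝ} (ha : a < 1) :
    HasDerivAt (qq ζ) (-(-2 / (2 * Real.sqrt (2 - 2 * a)) / ζ)) a := by
  have h0 : (2 : ℝ) - 2 * a ≠ 0 := by nlinarith
  have hin : HasDerivAt (fun z : ℝ => 2 - 2 * z) (-2) a := by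
    simpa using ((hasDerivAt_id a).const_mul (2 : ℝ)).const_sub 2
  have hs : HasDerivAt (fun z : ℝ => Real.sqrt (2 - 2 * z))
      (-2 / (2 * Real.sqrt (2 - 2 * a))) a := hin.sqrt h0
  exact (hs.div_const ζ).const_sub 1

lemma gg_hasDerivAt {ζ : ℝ} (hζ : 0 < ζ) {ℓ : ℕ} (hℓ : 2 ≤ ℓ) {a : ℝ} (ha : a < 1) :
    ∃ D, HasDerivAt (gg ζ ℓ) D a := by
  have hq := qq_hasDerivAt hζ ha
  set q' := -(-2 / (2 * Real.sqrt (2 - 2 * a)) / ζ) with hq'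
  have hqc : Continuous (qq ζ) := qq_continuous ζ
  rcases lt_trichotomy (qq ζ a) 0 with h | h | h
  · -- locally zero
    refine ⟨0, ?_⟩
    have hev : ∀ᶠ z in nhds a, gg ζ ℓ z = 0 := by
      have : ∀ᶠ z in nhds a, qq ζ z < 0 :=
        (hqc.continuousAt).eventually_lt_const h
      filter_upwards [this] with z hz
      rw [gg_eq, max_eq_right hz.le, zero_pow (by omega)]
    have h0 : gg ζ ℓ a = 0 := by
      rw [gg_eq, max_eq_right h.le, zero_pow (by omega)]
    exact (hasDerivAt_const a (0 : ℝ)).congr_of_eventuallyEq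
      (hev.mono fun z hz => by rw [hz])
  · -- the kink: derivative 0 since ℓ ≥ 2
    refine ⟨0, ?_⟩
    have hga : gg ζ ℓ a = 0 := by rw [gg_eq, h, max_self, zero_pow (by omega)]
    rw [hasDerivAt_iff_isLittleO]
    have hqO : (fun z => qq ζ z) =O[nhds a] fun z => z - a := by
      simpa [h] using hq.isBigO_sub
    have hqO' : (fun z => qq ζ z ^ ℓ) =O[nhds a] fun z => ‖z - a‖ ^ ℓ :=
      (hqO.norm_right).pow ℓ
    have hgO : (fun z => gg ζ ℓ z) =O[nhds a] fun z => qq ζ z ^ ℓ := by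
      apply Asymptotics.IsBigO.of_bound 1
      filter_upwards with z
      have h1 : |gg ζ ℓ z| = max (qq ζ z) 0 ^ ℓ := by
        rw [gg_eq, abs_of_nonneg (pow_nonneg (le_max_right _ _) _)]
      have h2 : max (qq ζ z) 0 ≤ |qq ζ z| := max_le (le_abs_self _) (abs_nonneg _)
      have h3 : max (qq ζ z) 0 ^ ℓ ≤ |qq ζ z| ^ ℓ :=
        pow_le_pow_left₀ (le_max_right _ _) h2 ℓ
      calc ‖gg ζ ℓ z‖ = max (qq ζ z) 0 ^ ℓ := h1
        _ ≤ |qq ζ z| ^ ℓ := h3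
        _ = ‖qq ζ z ^ ℓ‖ := by rw [Real.norm_eq_abs, abs_pow]
        _ ≤ 1 * ‖qq ζ z ^ ℓ‖ := by rw [one_mul]
    have := (hgO.trans hqO').trans_isLittleO
      (Asymptotics.isLittleO_pow_sub_sub a (by omega : 1 < ℓ))
    simpa [hga] using this
  · -- locally positive: smooth
    refine ⟨(ℓ : ℝ) * qq ζ a ^ (ℓ - 1) * q', ?_⟩
    have hev : ∀ᶠ z in nhds a, qq ζ z ^ ℓ = gg ζ ℓ z := by
      have : ∀ᶠ z in nhds a, 0 < qq ζ z :=
        (hqc.continuousAt).eventually_const_lt h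
      filter_upwards [this] with z hz
      rw [gg_eq, max_eq_left hz.le]
    exact (hq.pow ℓ).congr_of_eventuallyEq (hev.mono fun z hz => hz.symm)




lemma cos_half_identity (θ : ℝ) : Real.cos θ = 1 - 2 * Real.sin (θ / 2) ^ 2 := by
  have h2 := Real.cos_two_mul (θ / 2)
  have h3 := Real.sin_sq_add_cos_sq (θ / 2)
  rw [show 2 * (θ / 2) = θ by ring] at h2
  nlinarith

lemma sin_half_small {ζ : ℝ} (hζ : 0 < ζ) :
    ∀ᶠ θ : ℝ in nhds 0, |2 * Real.sin (θ / 2)| < ζ := by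
  have hc : ContinuousAt (fun θ : ℝ => |2 * Real.sin (θ / 2)|) 0 := by fun_prop
  have h0 : |2 * Real.sin ((0 : ℝ) / 2)| = 0 := by norm_num
  exact hc.tendsto.eventually_lt_const (by rw [h0]; exact hζ)

lemma gg_cos_right {ζ : ℝ} (hζ : 0 < ζ) (ℓ : ℕ) :
    HasDerivWithinAt (fun θ : ℝ => gg ζ ℓ (Real.cos θ)) (-(ℓ : ℝ) / ζ) (Set.Ici 0) 0 := by
  have hr : HasDerivAt (fun θ : ℝ => 1 - 2 * Real.sin (θ / 2) / ζ) (-(1 / ζ)) 0 := by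
    have h1 : HasDerivAt (fun θ : ℝ => θ / 2) (1 / 2) 0 := by
      simpa using (hasDerivAt_id (0 : ℝ)).div_const 2
    have h2 : HasDerivAt (fun θ : ℝ => Real.sin (θ / 2)) (Real.cos (0 / 2) * (1 / 2)) 0 :=
      by have := (Real.hasDerivAt_sin (0 / 2)).comp 0 h1; exact this
    have h3 := ((h2.const_mul (2 : ℝ)).div_const ζ).const_sub 1
    rw [show -(1 / ζ) = -(2 * (Real.cos (0 / 2) * (1 / 2)) / ζ) by norm_num]; exact h3
  have hpow : HasDerivAt (fun θ : ℝ => (1 - 2 * Real.sin (θ / 2) / ζ) ^ ℓ)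
      ((ℓ : ℝ) * (1 - 2 * Real.sin (0 / 2) / ζ) ^ (ℓ - 1) * (-(1 / ζ))) 0 := hr.pow ℓ
  have hval : ((ℓ : ℝ) * (1 - 2 * Real.sin (0 / 2) / ζ) ^ (ℓ - 1) * (-(1 / ζ))) = -(ℓ : ℝ) / ζ := by
    norm_num; ring
  rw [hval] at hpow
  refine HasDerivWithinAt.congr_of_eventuallyEq (hpow.hasDerivWithinAt) ?_ (by norm_num [gg])
  have hmem1 : Set.Ioo (-Real.pi) Real.pi ∈ nhds (0 : ℝ) :=
    isOpen_Ioo.mem_nhds ⟨by linarith [Real.pi_pos], Real.pi_pos⟩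
  filter_upwards [self_mem_nhdsWithin, nhdsWithin_le_nhds hmem1,
    nhdsWithin_le_nhds (sin_half_small hζ)] with θ hθ0 hθπ hθζ
  have hθ0' : (0 : ℝ) ≤ θ := hθ0
  have hsin : 0 ≤ Real.sin (θ / 2) :=
    Real.sin_nonneg_of_nonneg_of_le_pi (by linarith) (by nlinarith [hθπ.2, Real.pi_pos])
  have hsqrt : Real.sqrt (2 - 2 * Real.cos θ) = 2 * Real.sin (θ / 2) := by
    rw [cos_half_identity θ, show 2 - 2 * (1 - 2 * Real.sin (θ / 2) ^ 2)
      = (2 * Real.sin (θ / 2)) ^ 2 by ring]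
    exact Real.sqrt_sq (by positivity)
  have hlt : 2 * Real.sin (θ / 2) < ζ := (le_abs_self _).trans_lt hθζ
  have hpos : 0 ≤ 1 - 2 * Real.sin (θ / 2) / ζ := by
    have := (div_lt_one hζ).2 hlt
    linarith
  rw [gg, hsqrt, max_eq_left hpos]

lemma gg_cos_left {ζ : ℝ} (hζ : 0 < ζ) (ℓ : ℕ) :
    HasDerivWithinAt (fun θ : ℝ => gg ζ ℓ (Real.cos θ)) ((ℓ : ℝ) / ζ) (Set.Iic 0) 0 := by
  have hr : HasDerivAt (fun θ : ℝ => 1 + 2 * Real.sin (θ / 2) / ζ) (1 / ζ) 0 := by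
    have h1 : HasDerivAt (fun θ : ℝ => θ / 2) (1 / 2) 0 := by
      simpa using (hasDerivAt_id (0 : ℝ)).div_const 2
    have h2 : HasDerivAt (fun θ : ℝ => Real.sin (θ / 2)) (Real.cos (0 / 2) * (1 / 2)) 0 :=
      by have := (Real.hasDerivAt_sin (0 / 2)).comp 0 h1; exact this
    have h3 := ((h2.const_mul (2 : ℝ)).div_const ζ).const_add 1
    rw [show 1 / ζ = 2 * (Real.cos (0 / 2) * (1 / 2)) / ζ by norm_num]; exact h3
  have hpow : HasDerivAt (fun θ : ℝ => (1 + 2 * Real.sin (θ / 2) / ζ) ^ ℓ)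
      ((ℓ : ℝ) * (1 + 2 * Real.sin (0 / 2) / ζ) ^ (ℓ - 1) * (1 / ζ)) 0 := hr.pow ℓ
  have hval : ((ℓ : ℝ) * (1 + 2 * Real.sin (0 / 2) / ζ) ^ (ℓ - 1) * (1 / ζ)) = (ℓ : ℝ) / ζ := by
    norm_num; ring
  rw [hval] at hpow
  refine HasDerivWithinAt.congr_of_eventuallyEq (hpow.hasDerivWithinAt) ?_ (by norm_num [gg])
  have hmem1 : Set.Ioo (-Real.pi) Real.pi ∈ nhds (0 : ℝ) :=
    isOpen_Ioo.mem_nhds ⟨by linarith [Real.pi_pos], Real.pi_pos⟩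
  filter_upwards [self_mem_nhdsWithin, nhdsWithin_le_nhds hmem1,
    nhdsWithin_le_nhds (sin_half_small hζ)] with θ hθ0 hθπ hθζ
  have hθ0' : θ ≤ (0 : ℝ) := hθ0
  have hsin : Real.sin (θ / 2) ≤ 0 :=
    Real.sin_nonpos_of_nonpos_of_neg_pi_le (by linarith) (by nlinarith [hθπ.1, Real.pi_pos])
  have hsqrt : Real.sqrt (2 - 2 * Real.cos θ) = -(2 * Real.sin (θ / 2)) := by
    rw [cos_half_identity θ, show 2 - 2 * (1 - 2 * Real.sin (θ / 2) ^ 2)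
      = (-(2 * Real.sin (θ / 2))) ^ 2 by ring]
    exact Real.sqrt_sq (by nlinarith)
  have hlt : -(2 * Real.sin (θ / 2)) < ζ := (neg_le_abs _).trans_lt hθζ
  have hpos : 0 ≤ 1 + 2 * Real.sin (θ / 2) / ζ := by
    have : -(2 * Real.sin (θ / 2)) / ζ < 1 := (div_lt_one hζ).2 hlt
    have h4 : -(2 * Real.sin (θ / 2) / ζ) < 1 := by rw [← neg_div]; exact this
    linarith
  rw [gg, hsqrt, show 1 - -(2 * Real.sin (θ / 2)) / ζ = 1 + 2 * Real.sin (θ / 2) / ζ by ring,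
    max_eq_left hpos]



lemma sphereUniform_apply (d : ℕ) {U : Set (EuclideanSpace ℝ (Fin d))} (hU : MeasurableSet U) :
    sphereUniform d U =
      ((volume : Measure (EuclideanSpace ℝ (Fin d))).toSphere Set.univ)⁻¹ *
        (volume : Measure (EuclideanSpace ℝ (Fin d))).toSphere (Subtype.val ⁻¹' U) := by
  rw [sphereUniform, Measure.map_apply measurable_subtype_coe hU, Measure.smul_apply,
    smul_eq_mul]

lemma sphereUniform_ae_norm (d : ℕ) : ∀ᵐ w ∂(sphereUniform d), ‖w‖ = 1 := by
  rw [ae_iff]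
  have hms : MeasurableSet {w : EuclideanSpace ℝ (Fin d) | ¬ ‖w‖ = 1} :=
    ((isClosed_eq continuous_norm continuous_const).measurableSet).compl
  rw [sphereUniform_apply d hms]
  have : (Subtype.val ⁻¹' {w : EuclideanSpace ℝ (Fin d) | ¬ ‖w‖ = 1} :
      Set (Metric.sphere (0 : EuclideanSpace ℝ (Fin d)) 1)) = ∅ := by
    ext y
    simp only [Set.mem_preimage, Set.mem_setOf_eq, Set.mem_empty_iff_false, iff_false,
      not_not]
    exact mem_sphere_zero_iff_norm.1 y.2
  rw [this, measure_empty, mul_zero]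

lemma sphereUniform_finite (d : ℕ) : IsFiniteMeasure (sphereUniform d) := by
  constructor
  rw [sphereUniform_apply d MeasurableSet.univ, Set.preimage_univ]
  set t := (volume : Measure (EuclideanSpace ℝ (Fin d))).toSphere Set.univ
  rcases eq_or_ne t 0 with h | h
  · rw [h, mul_zero]; exact ENNReal.zero_lt_top
  rcases eq_or_ne t ⊤ with h' | h'
  · rw [h', ENNReal.inv_top, zero_mul]; exact ENNReal.zero_lt_top
  · rw [ENNReal.inv_mul_cancel h h']; exact ENNReal.one_lt_top

lemma sphereUniform_pos (d : ℕ) (hd : 0 < d) {U : Set (EuclideanSpace ℝ (Fin d))}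
    (hU : IsOpen U) {w₀ : EuclideanSpace ℝ (Fin d)} (hw₀U : w₀ ∈ U) (hw₀ : ‖w₀‖ = 1) :
    0 < sphereUniform d U := by
  rw [sphereUniform_apply d hU.measurableSet]
  have htop : (volume : Measure (EuclideanSpace ℝ (Fin d))).toSphere Set.univ ≠ ⊤ := measure_ne_top _ _
  refine ENNReal.mul_pos (ENNReal.inv_ne_zero.2 htop) ?_
  rw [Measure.toSphere_apply' _ (measurable_subtype_coe hU.measurableSet)]
  have hdim : Module.finrank ℝ (EuclideanSpace ℝ (Fin d)) = d := finrank_euclideanSpace_fin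
  refine (ENNReal.mul_pos (by simp [hdim]; omega) ?_).ne'
  -- volume of the cone is positive
  set O : Set (EuclideanSpace ℝ (Fin d)) := ({y : EuclideanSpace ℝ (Fin d) | 0 < ‖y‖} ∩ ((fun y : (EuclideanSpace ℝ (Fin d)) => ‖y‖⁻¹ • y) ⁻¹' U)) ∩ {y : EuclideanSpace ℝ (Fin d) | ‖y‖ < 1}
  have hA : IsOpen {y : EuclideanSpace ℝ (Fin d) | 0 < ‖y‖} := by
    have : {y : EuclideanSpace ℝ (Fin d) | 0 < ‖y‖} = (norm ⁻¹' Set.Ioi 0) := rfl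
    rw [this]; exact isOpen_Ioi.preimage continuous_norm
  have hcont : ContinuousOn (fun y : (EuclideanSpace ℝ (Fin d)) => ‖y‖⁻¹ • y) {y : EuclideanSpace ℝ (Fin d) | 0 < ‖y‖} := by
    apply ContinuousOn.fun_smul
    · exact (continuous_norm.continuousOn).inv₀ fun y hy => ne_of_gt hy
    · exact continuous_id.continuousOn
  have hO : IsOpen O := by
    refine IsOpen.inter ?_ (isOpen_lt continuous_norm continuous_const)
    exact hcont.isOpen_inter_preimage hA hU
  have hOne : ((2 : ℝ)⁻¹ • w₀) ∈ O := by
    have hn : ‖(2 : ℝ)⁻¹ • w₀‖ = 2⁻¹ := by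
      rw [norm_smul, hw₀, mul_one]; norm_num
    refine ⟨⟨by rw [Set.mem_setOf_eq, hn]; norm_num, ?_⟩, by rw [Set.mem_setOf_eq, hn]; norm_num⟩
    have : ‖(2 : ℝ)⁻¹ • w₀‖⁻¹ • ((2 : ℝ)⁻¹ • w₀) = w₀ := by
      rw [hn, smul_smul]; norm_num
    simpa [this] using hw₀U
  have hsub : O ⊆ Set.Ioo (0 : ℝ) 1 •
      (Subtype.val '' (Subtype.val ⁻¹' U : Set (Metric.sphere (0 : (EuclideanSpace ℝ (Fin d))) 1))) := by
    rintro y ⟨⟨hy0, hyU⟩, hy1⟩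
    have hy0' : (0 : ℝ) < ‖y‖ := hy0
    have hyne : ‖y‖ ≠ 0 := ne_of_gt hy0'
    set z : EuclideanSpace ℝ (Fin d) := ‖y‖⁻¹ • y with hz
    have hzn : ‖z‖ = 1 := by
      rw [hz, norm_smul, norm_inv, norm_norm, inv_mul_cancel₀ hyne]
    have hzU : z ∈ U := hyU
    have hzmem : z ∈ Subtype.val '' (Subtype.val ⁻¹' U : Set (Metric.sphere (0 : (EuclideanSpace ℝ (Fin d))) 1)) :=
      ⟨⟨z, mem_sphere_zero_iff_norm.2 hzn⟩, hzU, rfl⟩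
    refine Set.mem_smul.2 ⟨‖y‖, Set.mem_Ioo.2 ⟨hy0', hy1⟩, z, hzmem, ?_⟩
    rw [hz, smul_smul, mul_inv_cancel₀ hyne, one_smul]
  have hvol : (0 : ENNReal) < volume O := hO.measure_pos volume ⟨_, hOne⟩
  exact (hvol.trans_le (measure_mono hsub)).ne'


end Stmt9Aux
end Stmt9AuxSection

open Stmt9Aux in
/-- the Wendland activation `γ(z) = (1 − √(2−2z)/ζ)₊^ℓ` with
`ℓ = ⌊d/2⌋ + 1` and `0 < ζ ≤ √2` yields a strictly positive definite population
matrix `H` for any pairwise distinct unit vectors `x₁,…,xₙ`. -/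
theorem stmt_9 (d : ℕ) (hd : 3 ≤ d) (ζ : ℝ) (hζ0 : 0 < ζ) (hζ2 : ζ ≤ Real.sqrt 2)
    (γ : ℝ → ℝ)
    (hγ : ∀ z ∈ Set.Icc (-1 : ℝ) 1,
      γ z = max (1 - Real.sqrt (2 - 2 * z) / ζ) 0 ^ (d / 2 + 1))
    (n : ℕ) (hn : 1 ≤ n)
    (x : Fin n → EuclideanSpace ℝ (Fin d)) (hx : ∀ i, ‖x i‖ = 1)
    (hdist : Function.Injective x)
    (H : Matrix (Fin n) (Fin n) ℝ)
    (hH : H = Matrix.of fun i j => ∫ w, γ ⟪x i, w⟫_ℝ * γ ⟪w, x j⟫_ℝ ∂(sphereUniform d)) :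
    ∀ u : Fin n → ℝ, u ≠ 0 → 0 < u ⬝ᵥ H.mulVec u := by
  intro u hu
  set ℓ : ℕ := d / 2 + 1 with hℓdef
  have hℓ2 : 2 ≤ ℓ := by omega
  haveI hfin : IsFiniteMeasure (sphereUniform d) := sphereUniform_finite d
  set σ := sphereUniform d with hσ
  set G : Fin n → EuclideanSpace ℝ (Fin d) → ℝ :=
    fun i w => gg ζ ℓ ⟪x i, w⟫_ℝ with hGdef
  have hGcont : ∀ i, Continuous (G i) := fun i =>
    (gg_continuous ζ ℓ).comp (continuous_const.inner continuous_id)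
  have hG0 : ∀ i w, 0 ≤ G i w := fun i w => gg_nonneg ζ ℓ _
  have hG1 : ∀ i w, G i w ≤ 1 := fun i w => gg_le_one hζ0 ℓ _
  set f : EuclideanSpace ℝ (Fin d) → ℝ := fun w => ∑ i, u i * G i w with hfdef
  have hfcont : Continuous f := by
    apply continuous_finset_sum
    intro i _
    exact continuous_const.mul (hGcont i)
  -- rewrite the matrix entries
  have hHint : ∀ i j, H i j = ∫ w, G i w * G j w ∂σ := by
    intro i j
    rw [hH]
    refine integral_congr_ae ?_
    filter_upwards [sphereUniform_ae_norm d] with w hw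
    have h1 : |⟪x i, w⟫_ℝ| ≤ 1 := by
      have := abs_real_inner_le_norm (x i) w
      rw [hx i, hw] at this; simpa using this
    have h2 : |⟪x j, w⟫_ℝ| ≤ 1 := by
      have := abs_real_inner_le_norm (x j) w
      rw [hx j, hw] at this; simpa using this
    have hm1 := abs_le.1 h1
    have hm2 := abs_le.1 h2
    show γ ⟪x i, w⟫_ℝ * γ ⟪w, x j⟫_ℝ = _
    rw [real_inner_comm (x j) w, hγ _ ⟨hm1.1, hm1.2⟩, hγ _ ⟨hm2.1, hm2.2⟩]
    rfl
  -- integrability of products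
  have hInt : ∀ i j : Fin n, Integrable (fun w => (u i * G i w) * (u j * G j w)) σ := by
    intro i j
    refine (integrable_const (|u i| * |u j|)).mono' ?_ (ae_of_all _ fun w => ?_)
    · exact ((continuous_const.mul (hGcont i)).mul
        (continuous_const.mul (hGcont j))).aestronglyMeasurable
    · have := hG0 i w; have := hG1 i w; have := hG0 j w; have := hG1 j w
      rw [Real.norm_eq_abs, abs_mul, abs_mul, abs_mul,
        abs_of_nonneg (hG0 i w), abs_of_nonneg (hG0 j w)]
      have h1 : |u i| * G i w ≤ |u i| * 1 :=
        mul_le_mul_of_nonneg_left (hG1 i w) (abs_nonneg _)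
      have h2 : |u j| * G j w ≤ |u j| * 1 :=
        mul_le_mul_of_nonneg_left (hG1 j w) (abs_nonneg _)
      calc |u i| * G i w * (|u j| * G j w) ≤ (|u i| * 1) * (|u j| * 1) := by
            apply mul_le_mul h1 h2 (by positivity) (by positivity)
        _ = |u i| * |u j| := by ring
  -- the quadratic form equals an integral of a square
  have expand : u ⬝ᵥ H.mulVec u = ∫ w, f w ^ 2 ∂σ := by
    have e1 : u ⬝ᵥ H.mulVec u = ∑ i, ∑ j, ∫ w, (u i * G i w) * (u j * G j w) ∂σ := by
      simp only [dotProduct, Matrix.mulVec, hHint]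
      refine Finset.sum_congr rfl fun i _ => ?_
      rw [Finset.mul_sum]
      refine Finset.sum_congr rfl fun j _ => ?_
      rw [show u i * ((∫ w, G i w * G j w ∂σ) * u j)
          = (u i * u j) * ∫ w, G i w * G j w ∂σ by ring, ← integral_const_mul]
      exact integral_congr_ae (ae_of_all _ fun w => by ring)
    rw [e1]
    have e2 : ∀ i : Fin n, ∑ j, ∫ w, (u i * G i w) * (u j * G j w) ∂σ
        = ∫ w, ∑ j, (u i * G i w) * (u j * G j w) ∂σ :=
      fun i => (integral_finset_sum _ fun j _ => hInt i j).symm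
    simp only [e2]
    rw [← integral_finset_sum _ fun i _ => integrable_finset_sum _ fun j _ => hInt i j]
    refine integral_congr_ae (ae_of_all _ fun w => ?_)
    show (∑ i, ∑ j, (u i * G i w) * (u j * G j w)) = f w ^ 2
    simp only [hfdef, pow_two, Finset.sum_mul_sum]
  rw [expand]
  have hf2int : Integrable (fun w => f w ^ 2) σ := by
    refine (integrable_const ((∑ i, |u i|) ^ 2)).mono' ?_ (ae_of_all _ fun w => ?_)
    · exact (hfcont.pow 2).aestronglyMeasurable
    · rw [Real.norm_eq_abs, abs_pow]
      have h1 : |f w| ≤ ∑ i, |u i| := by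
        refine (Finset.abs_sum_le_sum_abs _ _).trans ?_
        refine Finset.sum_le_sum fun i _ => ?_
        rw [abs_mul, abs_of_nonneg (hG0 i w)]
        calc |u i| * G i w ≤ |u i| * 1 :=
              mul_le_mul_of_nonneg_left (hG1 i w) (abs_nonneg _)
          _ = |u i| := mul_one _
      exact pow_le_pow_left₀ (abs_nonneg _) h1 2
  rw [integral_pos_iff_support_of_nonneg (fun w => sq_nonneg (f w)) hf2int]
  -- existence of a sphere point where f doesn't vanish
  have hex : ∃ w₀ : EuclideanSpace ℝ (Fin d), ‖w₀‖ = 1 ∧ f w₀ ≠ 0 := by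
    by_contra hcon
    push_neg at hcon
    refine hu (funext fun i => ?_)
    show u i = 0
    -- orthogonal unit vector
    have hxine : x i ≠ 0 := by
      intro h
      have := hx i
      rw [h, norm_zero] at this
      norm_num at this
    have hKne : ((ℝ ∙ x i)ᗮ : Submodule ℝ (EuclideanSpace ℝ (Fin d))) ≠ ⊥ := by
      intro hbot
      have htop : (ℝ ∙ x i) = (⊤ : Submodule ℝ (EuclideanSpace ℝ (Fin d))) :=
        Submodule.orthogonal_eq_bot_iff.1 hbot
      have h1 : Module.finrank ℝ (ℝ ∙ x i) = 1 := finrank_span_singleton hxine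
      have h2 : Module.finrank ℝ (ℝ ∙ x i)
          = Module.finrank ℝ (EuclideanSpace ℝ (Fin d)) := by
        rw [htop, finrank_top]
      rw [h2, finrank_euclideanSpace_fin] at h1
      omega
    obtain ⟨v₀, hv₀K, hv₀ne⟩ := Submodule.exists_mem_ne_zero_of_ne_bot hKne
    set v : EuclideanSpace ℝ (Fin d) := (‖v₀‖⁻¹ : ℝ) • v₀ with hvdef
    have hv1 : ‖v‖ = 1 := norm_smul_inv_norm hv₀ne
    have hv2 : ⟪x i, v⟫_ℝ = 0 := by
      have h0 : ⟪x i, v₀⟫_ℝ = 0 :=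
        (Submodule.mem_orthogonal _ v₀).1 hv₀K (x i) (Submodule.mem_span_singleton_self _)
      rw [hvdef, real_inner_smul_right, h0, mul_zero]
    set a : Fin n → ℝ := fun j => ⟪x j, x i⟫_ℝ with hadef
    set b : Fin n → ℝ := fun j => ⟪x j, v⟫_ℝ with hbdef
    set c : ℝ → EuclideanSpace ℝ (Fin d) :=
      fun θ => Real.cos θ • x i + Real.sin θ • v with hcdef
    have hcnorm : ∀ θ, ‖c θ‖ = 1 := by
      intro θ
      have hsq : ‖c θ‖ ^ 2 = 1 := by
        rw [← real_inner_self_eq_norm_sq, hcdef]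
        simp only [inner_add_left, inner_add_right, real_inner_smul_left,
          real_inner_smul_right]
        have hv2' : ⟪v, x i⟫_ℝ = 0 := by rw [real_inner_comm]; exact hv2
        rw [real_inner_self_eq_norm_sq (x i), real_inner_self_eq_norm_sq v, hx i, hv1,
          hv2, hv2']
        have := Real.sin_sq_add_cos_sq θ
        nlinarith
      have h0 := norm_nonneg (c θ)
      nlinarith
    have hip : ∀ j θ, ⟪x j, c θ⟫_ℝ = a j * Real.cos θ + b j * Real.sin θ := by
      intro j θ
      rw [hcdef]
      simp only [inner_add_right, real_inner_smul_right]
      rw [hadef, hbdef]; ring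
    set T : Fin n → ℝ → ℝ :=
      fun j θ => u j * gg ζ ℓ (a j * Real.cos θ + b j * Real.sin θ) with hTdef
    have hTsum : ∀ θ, ∑ j, T j θ = 0 := by
      intro θ
      have h0 := hcon (c θ) (hcnorm θ)
      rw [hfdef] at h0
      simp only [hTdef]
      rw [← h0]
      refine Finset.sum_congr rfl fun j _ => ?_
      rw [hGdef]
      simp only
      rw [hip j θ]
    -- derivative of the terms j ≠ i at 0
    have hD : ∀ j, j ≠ i → ∃ D, HasDerivAt (T j) D 0 := by
      intro j hj
      have haj : a j < 1 := by
        have h1 : ‖x j - x i‖ ^ 2 = 2 - 2 * a j := by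
          rw [norm_sub_sq_real, hx, hx, hadef]; ring
        have h2 : 0 < ‖x j - x i‖ := by
          rw [norm_pos_iff, sub_ne_zero]
          exact fun e => hj (hdist e)
        nlinarith
      obtain ⟨D, hDj⟩ := gg_hasDerivAt hζ0 hℓ2 haj
      have hs : HasDerivAt (fun θ : ℝ => a j * Real.cos θ + b j * Real.sin θ)
          (a j * (-Real.sin 0) + b j * Real.cos 0) 0 :=
        ((Real.hasDerivAt_cos 0).const_mul (a j)).add
          ((Real.hasDerivAt_sin 0).const_mul (b j))
      have hDj' : HasDerivAt (gg ζ ℓ) D (a j * Real.cos 0 + b j * Real.sin 0) := by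
        simpa using hDj
      have hcomp := (hDj'.comp 0 hs).const_mul (u j)
      exact ⟨_, by simpa [Function.comp, hTdef] using hcomp⟩
    classical
    set Dm : Fin n → ℝ := fun j => if hj : j = i then 0 else (hD j hj).choose with hDm
    have hR : HasDerivAt (fun θ => ∑ j ∈ Finset.univ.erase i, T j θ)
        (∑ j ∈ Finset.univ.erase i, Dm j) 0 := by
      refine HasDerivAt.fun_sum fun j hj => ?_
      have hj' : j ≠ i := Finset.ne_of_mem_erase hj
      simpa [hDm, hj'] using (hD j hj').choose_spec
    have hTieq : T i = fun θ => -∑ j ∈ Finset.univ.erase i, T j θ := by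
      funext θ
      have h1 := hTsum θ
      have h2 : ∑ j ∈ Finset.univ.erase i, T j θ + T i θ = ∑ j, T j θ :=
        Finset.sum_erase_add _ _ (Finset.mem_univ i)
      linarith
    have hTi2 : HasDerivAt (T i) (-∑ j ∈ Finset.univ.erase i, Dm j) 0 := by
      rw [hTieq]; exact hR.neg
    have hai : a i = 1 := by
      rw [hadef]
      simp only
      rw [real_inner_self_eq_norm_sq, hx i]; norm_num
    have hTieq2 : T i = fun θ => u i * gg ζ ℓ (Real.cos θ) := by
      funext θ
      rw [hTdef]
      simp only
      rw [hai]
      have hbi : b i = 0 := hv2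
      rw [hbi]; ring_nf
    have hright : HasDerivWithinAt (T i) (u i * (-(ℓ : ℝ) / ζ)) (Set.Ici 0) 0 := by
      rw [hTieq2]; exact (gg_cos_right hζ0 ℓ).const_mul (u i)
    have hleft : HasDerivWithinAt (T i) (u i * ((ℓ : ℝ) / ζ)) (Set.Iic 0) 0 := by
      rw [hTieq2]; exact (gg_cos_left hζ0 ℓ).const_mul (u i)
    have hu1 : u i * (-(ℓ : ℝ) / ζ) = -∑ j ∈ Finset.univ.erase i, Dm j :=
      (uniqueDiffOn_Ici (0:ℝ) 0 Set.self_mem_Ici).eq_deriv _ hright (hTi2.hasDerivWithinAt)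
    have hu2 : u i * ((ℓ : ℝ) / ζ) = -∑ j ∈ Finset.univ.erase i, Dm j :=
      (uniqueDiffOn_Iic (0:ℝ) 0 Set.self_mem_Iic).eq_deriv _ hleft (hTi2.hasDerivWithinAt)
    have heq : u i * (-(ℓ : ℝ) / ζ) = u i * ((ℓ : ℝ) / ζ) := by rw [hu1, hu2]
    have hℓpos : (0 : ℝ) < (ℓ : ℝ) / ζ := by positivity
    have h2 : u i * ((ℓ : ℝ) / ζ) = 0 := by
      have h3 : u i * (-(ℓ : ℝ) / ζ) = -(u i * ((ℓ : ℝ) / ζ)) := by ring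
      linarith [heq, h3]
    exact (mul_eq_zero.1 h2).resolve_right (ne_of_gt hℓpos)
  obtain ⟨w₀, hw₀n, hw₀f⟩ := hex
  have hsupp : Function.support (fun w => f w ^ 2) = {w | f w ≠ 0} := by
    ext w
    simp [Function.support, pow_eq_zero_iff]
  rw [hsupp]
  have hUopen : IsOpen {w : EuclideanSpace ℝ (Fin d) | f w ≠ 0} :=
    isOpen_compl_singleton.preimage hfcont
  exact sphereUniform_pos d (by omega) hUopen hw₀f hw₀n
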